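/- Combining the diagonal-scaling and row-addition lemmas: if A has full row rank, W satisfies WA⁺A = W, D is diagonal with entries ≥ 1, and à = [A; C] is A with extra rows appended, then ‖W(DÃ')⁺‖_F ≤ ‖WA⁺‖_F, where D is a diagonal matrix of size matching à with all diagonal entries ≥ 1. In particular, under the matrix mechanism with fixed per-query noise scale, an analyst's expected error cannot increase when the strategy matrix is modified by scaling rows up and adding rows. -/

import Mathlib

open Matrix BigOperators

/-- Frobenius norm of a real matrix. -/
noncomputable def frob {m n : Type*} [Fintype m] [Fintype n] (M : Matrix m n ℝ) : ℝ :=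
  Real.sqrt (∑ i, ∑ j, (M i j) ^ 2)

/-- `P` is the Moore-Penrose pseudoinverse of `A` (the four Penrose conditions). -/
def IsMPInv {k n : Type*} [Fintype k] [Fintype n] (A : Matrix k n ℝ) (P : Matrix n k ℝ) : Prop :=
  A * P * A = A ∧ P * A * P = P ∧ (A * P)ᵀ = A * P ∧ (P * A)ᵀ = P * A

theorem stmt8 {m k p n : Type*} [Fintype m] [Fintype k] [Fintype p] [Fintype n]
    [DecidableEq (k ⊕ p)]
    (W : Matrix m n ℝ) (A : Matrix k n ℝ) (C : Matrix p n ℝ) (Ap : Matrix n k ℝ)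
    (d : k ⊕ p → ℝ) (hd : ∀ i, 1 ≤ d i) (P : Matrix n (k ⊕ p) ℝ)
    (hAp : IsMPInv A Ap) (hW : W * Ap * A = W)
    (hP : IsMPInv (Matrix.diagonal d * Matrix.fromRows A C) P) :
    frob (W * P) ≤ frob (W * Ap) := by
  set B : Matrix (k ⊕ p) n ℝ := Matrix.diagonal d * Matrix.fromRows A C with hB
  obtain ⟨hB1, hB2, hB3, hB4⟩ := hP
  -- Q := B * P is a symmetric idempotent
  set Q : Matrix (k ⊕ p) (k ⊕ p) ℝ := B * P with hQ
  have hQs : Qᵀ = Q := hB3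
  have hQi : Q * Q = Q := by
    rw [hQ]; calc B * P * (B * P) = B * P * B * P := by rw [Matrix.mul_assoc (B*P)]
    _ = B * P := by rw [hB1]
  apply Real.sqrt_le_sqrt
  apply Finset.sum_le_sum
  intro i _
  -- row-wise argument
  set w : n → ℝ := fun l => W i l with hw
  have hWProw : ∀ j, (W * P) i j = (w ᵥ* P) j := fun j => by
    simp [Matrix.mul_apply, Matrix.vecMul, dotProduct, hw]
  have hWAprow : ∀ j, (W * Ap) i j = (w ᵥ* Ap) j := fun j => by
    simp [Matrix.mul_apply, Matrix.vecMul, dotProduct, hw]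
  set z : k ⊕ p → ℝ :=
    Sum.elim (fun j => (w ᵥ* Ap) j / d (Sum.inl j)) (fun _ => 0) with hz
  have hdpos : ∀ j, (0:ℝ) < d j := fun j => lt_of_lt_of_le one_pos (hd j)
  -- z ᵥ* B = w
  have hzB : z ᵥ* B = w := by
    have h1 : z ᵥ* Matrix.diagonal d
        = Sum.elim (fun j => (w ᵥ* Ap) j) (fun _ => (0:ℝ)) := by
      funext x
      rcases x with x | x <;>
        simp [Matrix.vecMul_diagonal, hz, div_mul_cancel₀ _ (hdpos _).ne']
    have h2 : z ᵥ* B = (w ᵥ* Ap) ᵥ* A := by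
      rw [hB, ← Matrix.vecMul_vecMul, h1]
      have := Matrix.sumElim_vecMul_fromRows A C (fun j => (w ᵥ* Ap) j) (fun _ => (0:ℝ))
      simp only [this]
      funext x
      simp [Matrix.vecMul, dotProduct]
    rw [Matrix.mul_assoc] at hW
    rw [h2, Matrix.vecMul_vecMul]
    funext x
    have := congrFun (congrFun hW i) x
    simpa [Matrix.mul_apply, Matrix.vecMul, dotProduct, hw] using this
  -- w ᵥ* P = z ᵥ* Q
  have hwP : w ᵥ* P = z ᵥ* Q := by rw [hQ, ← Matrix.vecMul_vecMul, hzB]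
  -- projection bound: ∑ (z ᵥ* Q)² ≤ ∑ z²
  set u : k ⊕ p → ℝ := z ᵥ* Q with hu
  have huu : ∑ j, u j * u j = ∑ j, u j * z j := by
    have huQ : u ᵥ* Q = u := by rw [hu, Matrix.vecMul_vecMul, hQi]
    have hQz : Qᵀ *ᵥ z = u := by rw [Matrix.mulVec_transpose, hu]
    have h1 : u ⬝ᵥ u = u ⬝ᵥ z := by
      calc u ⬝ᵥ u = u ⬝ᵥ (Qᵀ *ᵥ z) := by rw [hQz]
        _ = (u ᵥ* Qᵀ) ⬝ᵥ z := Matrix.dotProduct_mulVec u Qᵀ z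
        _ = u ⬝ᵥ z := by rw [hQs, huQ]
    simpa [dotProduct] using h1
  have hproj : ∑ j, u j ^ 2 ≤ ∑ j, z j ^ 2 := by
    have hsq : (0:ℝ) ≤ ∑ j, (z j - u j) ^ 2 :=
      Finset.sum_nonneg fun j _ => sq_nonneg _
    have hexp : ∑ j, (z j - u j) ^ 2
        = ∑ j, z j ^ 2 - 2 * ∑ j, u j * z j + ∑ j, u j ^ 2 := by
      rw [show ∑ j, (z j - u j) ^ 2
          = ∑ j, (z j ^ 2 - 2 * (u j * z j) + u j ^ 2) from
        Finset.sum_congr rfl fun j _ => by ring]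
      rw [Finset.sum_add_distrib, Finset.sum_sub_distrib, Finset.mul_sum]
    have huu2 : ∑ j, u j ^ 2 = ∑ j, u j * z j := by
      simpa [sq] using huu
    linarith [hsq, hexp, huu2]
  -- ∑ z² ≤ ∑ (w ᵥ* Ap)²
  have hzle : ∑ j, z j ^ 2 ≤ ∑ j, (w ᵥ* Ap) j ^ 2 := by
    rw [Fintype.sum_sum_type]
    have : ∀ j : k, z (Sum.inl j) ^ 2 ≤ (w ᵥ* Ap) j ^ 2 := by
      intro j
      rw [hz]
      simp only [Sum.elim_inl, div_pow]
      exact div_le_self (sq_nonneg _) (one_le_pow₀ (hd (Sum.inl j)))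
    calc (∑ j : k, z (Sum.inl j) ^ 2) + ∑ j : p, z (Sum.inr j) ^ 2
        = ∑ j : k, z (Sum.inl j) ^ 2 := by simp [hz]
      _ ≤ ∑ j, (w ᵥ* Ap) j ^ 2 := Finset.sum_le_sum fun j _ => this j
  calc ∑ j, (W * P) i j ^ 2 = ∑ j, u j ^ 2 := by
        simp only [hWProw, hwP, hu]
    _ ≤ ∑ j, z j ^ 2 := hproj
    _ ≤ ∑ j, (w ᵥ* Ap) j ^ 2 := hzle
    _ = ∑ j, (W * Ap) i j ^ 2 := by simp only [hWAprow]
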